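/- Probabilistic representation of Stirling numbers of the first kind: if Y = U·T where U is uniform on [0,1] and T is exponential with density e^{-θ}, independent, and S_k is the sum of k independent copies of Y, then s(n,k) = (-1)^{n-k} C(n,k) E[S_k^{n-k}] for 0 ≤ k ≤ n, where s(n,k) are the (signed) Stirling numbers of the first kind. -/

import Mathlib

open Finset MeasureTheory

/-- The signed Stirling numbers of the first kind, defined by the recurrence
`s(n+1, k+1) = s(n, k) - n · s(n, k+1)` with `s(0,0) = 1`. -/
def stirling1 : ℕ → ℕ → ℤ
  | 0, 0 => 1
  | 0, _ + 1 => 0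
  | _ + 1, 0 => 0
  | n + 1, k + 1 => stirling1 n k - n * stirling1 n (k + 1)

noncomputable def tq : ℕ → ℕ → ℝ
  | 0, m => if m = 0 then 1 else 0
  | k + 1, m => ∑ p ∈ Finset.range (m + 1), ((p : ℝ) + 1)⁻¹ * tq k (m - p)

lemma tq_zero (k : ℕ) : tq k 0 = 1 := by
  induction k with
  | zero => simp [tq]
  | succ k ih => simp [tq, ih]

lemma sum_exchange (m : ℕ) (F : ℕ → ℕ → ℝ) :
    ∑ p ∈ Finset.range (m + 1), ∑ r ∈ Finset.range (m + 1 - p), F p r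
      = ∑ q ∈ Finset.range (m + 1), ∑ p ∈ Finset.range (q + 1), F p (q - p) := by
  rw [Finset.sum_sigma', Finset.sum_sigma']
  refine Finset.sum_nbij' (fun x ↦ ⟨x.1 + x.2, x.1⟩) (fun x ↦ ⟨x.2, x.1 - x.2⟩) ?_ ?_ ?_ ?_ ?_
  · rintro ⟨a, b⟩ hab
    simp only [Finset.mem_sigma, Finset.mem_range] at hab
    have : (⟨a + b, a⟩ : Σ _ : ℕ, ℕ) ∈ (Finset.range (m + 1)).sigma
        (fun q => Finset.range (q + 1)) :=
      Finset.mem_sigma.mpr ⟨Finset.mem_range.mpr (show a + b < m + 1 by omega),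
        Finset.mem_range.mpr (show a < a + b + 1 by omega)⟩
    exact this
  · rintro ⟨a, b⟩ hab
    simp only [Finset.mem_sigma, Finset.mem_range] at hab
    have : (⟨b, a - b⟩ : Σ _ : ℕ, ℕ) ∈ (Finset.range (m + 1)).sigma
        (fun p => Finset.range (m + 1 - p)) :=
      Finset.mem_sigma.mpr ⟨Finset.mem_range.mpr (show b < m + 1 by omega),
        Finset.mem_range.mpr (show a - b < m + 1 - b by omega)⟩
    exact this
  · rintro ⟨a, b⟩ hab
    simp only [Finset.mem_sigma, Finset.mem_range] at hab
    exact congrArg (Sigma.mk a) (show a + b - a = b by omega)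
  · rintro ⟨a, b⟩ hab
    simp only [Finset.mem_sigma, Finset.mem_range] at hab
    exact Sigma.ext (show b + (a - b) = a by omega) (heq_of_eq rfl)
  · rintro ⟨a, b⟩ hab
    simp only [Finset.mem_sigma, Finset.mem_range] at hab
    exact congrArg (F a) (show b = a + b - a by omega)

lemma tq_L (k : ℕ) : ∀ m : ℕ, ((m : ℝ) + k + 1) * tq (k + 1) m
    = ((k : ℝ) + 1) * ∑ r ∈ Finset.range (m + 1), tq k r := by
  induction k with
  | zero =>
    intro m
    have h1 : tq 1 m = ((m : ℝ) + 1)⁻¹ := by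
      rw [tq]
      rw [Finset.sum_eq_single m]
      · simp [tq]
      · intro p hp hpm
        rw [tq]
        simp only [Finset.mem_range] at hp
        have : ¬ (m - p = 0) := by omega
        simp [this]
      · intro hm; simp at hm
    have h2 : ∑ r ∈ Finset.range (m + 1), tq 0 r = 1 := by
      rw [Finset.sum_eq_single 0]
      · simp [tq]
      · intro r _ hr; simp [tq, hr]
      · intro hm; simp at hm
    rw [h1, h2]
    push_cast
    field_simp
    ring
  | succ k ih =>
    intro m
    have expand : ∀ p ∈ Finset.range (m + 1),
        ((m : ℝ) + (k + 1) + 1) * (((p : ℝ) + 1)⁻¹ * tq (k + 1) (m - p))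
          = tq (k + 1) (m - p)
            + ((p : ℝ) + 1)⁻¹ * (((k : ℝ) + 1) * ∑ r ∈ Finset.range ((m - p) + 1), tq k r) := by
      intro p hp
      simp only [Finset.mem_range] at hp
      rw [← ih (m - p)]
      have hcast : ((m - p : ℕ) : ℝ) = (m : ℝ) - p := by
        rw [Nat.cast_sub (by omega)]
      rw [hcast]
      have hne : ((p : ℝ) + 1) ≠ 0 := by positivity
      field_simp
      ring
    rw [tq, Finset.mul_sum]
    rw [show ((k + 1 : ℕ) : ℝ) = (k : ℝ) + 1 by push_cast; ring]
    rw [Finset.sum_congr rfl expand, Finset.sum_add_distrib]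
    have first : ∑ p ∈ Finset.range (m + 1), tq (k + 1) (m - p)
        = ∑ r ∈ Finset.range (m + 1), tq (k + 1) r := by
      rw [← Finset.sum_range_reflect]
      apply Finset.sum_congr rfl
      intro p hp
      simp only [Finset.mem_range] at hp
      congr 1
      omega
    have second : ∑ p ∈ Finset.range (m + 1),
        ((p : ℝ) + 1)⁻¹ * (((k : ℝ) + 1) * ∑ r ∈ Finset.range ((m - p) + 1), tq k r)
        = ((k : ℝ) + 1) * ∑ r ∈ Finset.range (m + 1), tq (k + 1) r := by
      have e1 : ∀ p ∈ Finset.range (m + 1),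
          ((p : ℝ) + 1)⁻¹ * (((k : ℝ) + 1) * ∑ r ∈ Finset.range ((m - p) + 1), tq k r)
          = ((k : ℝ) + 1) * ∑ r ∈ Finset.range (m + 1 - p), ((p : ℝ) + 1)⁻¹ * tq k r := by
        intro p hp
        simp only [Finset.mem_range] at hp
        have : m - p + 1 = m + 1 - p := by omega
        rw [this]
        simp only [Finset.mul_sum]
        apply Finset.sum_congr rfl
        intro r _
        ring
      rw [Finset.sum_congr rfl e1, ← Finset.mul_sum]
      congr 1
      rw [sum_exchange m (fun p r => ((p : ℝ) + 1)⁻¹ * tq k r)]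
      apply Finset.sum_congr rfl
      intro q _
      rw [tq]
    rw [first, second]
    push_cast
    ring

lemma tq_star (k m : ℕ) : ((m : ℝ) + k + 2) * tq (k + 1) (m + 1)
    = ((k : ℝ) + 1) * tq k (m + 1) + ((m : ℝ) + k + 1) * tq (k + 1) m := by
  have h1 := tq_L k (m + 1)
  have h2 := tq_L k m
  rw [Finset.sum_range_succ] at h1
  push_cast at h1
  linear_combination h1 - h2

lemma stirling1_eq_zero : ∀ n k : ℕ, n < k → stirling1 n k = 0 := by
  intro n
  induction n with
  | zero => intro k hk; match k, hk with | k + 1, _ => rfl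
  | succ n ih =>
    intro k hk
    match k, hk with
    | k + 1, hk =>
      show stirling1 n k - n * stirling1 n (k + 1) = 0
      rw [ih k (by omega), ih (k + 1) (by omega)]
      ring

lemma stirling1_diag : ∀ n : ℕ, stirling1 n n = 1 := by
  intro n
  induction n with
  | zero => rfl
  | succ n ih =>
    show stirling1 n n - n * stirling1 n (n + 1) = 1
    rw [ih, stirling1_eq_zero n (n + 1) (by omega)]
    ring

lemma stirling1_key : ∀ n k : ℕ, k ≤ n →
    (-1 : ℝ) ^ (n - k) * (stirling1 n k : ℝ) * (k.factorial : ℝ)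
      = (n.factorial : ℝ) * tq k (n - k) := by
  intro n
  induction n with
  | zero =>
    intro k hk
    have : k = 0 := by omega
    subst this
    simp [stirling1, tq_zero]
  | succ n ih =>
    intro k hk
    match k with
    | 0 =>
      rw [show stirling1 (n + 1) 0 = 0 from rfl]
      simp [tq]
    | k + 1 =>
      have hkn : k ≤ n := by omega
      have hsub : n + 1 - (k + 1) = n - k := by omega
      have hrec : (stirling1 (n + 1) (k + 1) : ℝ)
          = (stirling1 n k : ℝ) - (n : ℝ) * (stirling1 n (k + 1) : ℝ) := by
        show ((stirling1 n k - n * stirling1 n (k + 1) : ℤ) : ℝ) = _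
        push_cast
        ring
      rcases eq_or_lt_of_le hkn with heq | hlt
      · -- k = n
        subst heq
        rw [hsub, Nat.sub_self, tq_zero, hrec, stirling1_diag,
          stirling1_eq_zero k (k + 1) (by omega)]
        push_cast
        ring
      · -- k < n
        have h1 := ih k hkn
        have h2 := ih (k + 1) (by omega)
        set m : ℕ := n - k with hm
        have hm1 : 1 ≤ m := by omega
        have hnk1 : n - (k + 1) = m - 1 := by omega
        have hmm : m = (m - 1) + 1 := by omega
        rw [hsub, hrec]
        rw [hnk1] at h2
        -- goal : (-1)^m * (s(n,k) - n s(n,k+1)) * (k+1)! = (n+1)! * tq (k+1) m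
        have hfac : ((k + 1).factorial : ℝ) = ((k : ℝ) + 1) * (k.factorial : ℝ) := by
          rw [Nat.factorial_succ]; push_cast; ring
        have hfacn : ((n + 1).factorial : ℝ) = ((n : ℝ) + 1) * (n.factorial : ℝ) := by
          rw [Nat.factorial_succ]; push_cast; ring
        have hsign : (-1 : ℝ) ^ m = -(-1 : ℝ) ^ (m - 1) := by
          conv_lhs => rw [hmm]
          rw [pow_succ]
          ring
        -- star identity at m-1:
        have hstar := tq_star k (m - 1)
        rw [← hmm] at hstar
        have hcast : ((m - 1 : ℕ) : ℝ) = (m : ℝ) - 1 := by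
          rw [Nat.cast_sub hm1]; simp
        rw [hcast] at hstar
        have hnm : (n : ℝ) = (m : ℝ) + k := by
          have : n = m + k := by omega
          rw [this]; push_cast; ring
        rw [hfac, hfacn, hsign]
        -- from h1: (-1)^m s(n,k) k! = n! tq k m
        -- from h2: (-1)^(m-1) s(n,k+1) (k+1)! = n! tq (k+1) (m-1)
        rw [hfac] at h2
        -- now pure algebra
        rw [hsign] at h1
        rw [hnm]
        linear_combination ((k : ℝ) + 1) * h1 + ((m : ℝ) + (k : ℝ)) * h2
          - (n.factorial : ℝ) * hstar

lemma indicator_pi_prod {k : ℕ} (S : Fin k → Set ℝ) (g : Fin k → ℝ → ℝ) (x : Fin k → ℝ) :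
    (Set.univ.pi S).indicator (fun t => ∏ i, g i (t i)) x
      = ∏ i, (S i).indicator (g i) (x i) := by
  by_cases hx : x ∈ Set.univ.pi S
  · rw [Set.indicator_of_mem hx]
    exact Finset.prod_congr rfl fun i _ =>
      (Set.indicator_of_mem (hx i (Set.mem_univ i)) (g i)).symm
  · rw [Set.indicator_of_notMem hx]
    rw [Set.mem_pi] at hx
    push_neg at hx
    obtain ⟨i, _, hi⟩ := hx
    exact (Finset.prod_eq_zero (Finset.mem_univ i) (Set.indicator_of_notMem hi (g i))).symm

lemma setIntegral_pi_prod {k : ℕ} (S : Fin k → Set ℝ) (hS : ∀ i, MeasurableSet (S i))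
    (g : Fin k → ℝ → ℝ) :
    ∫ x in Set.univ.pi S, ∏ i, g i (x i) = ∏ i, ∫ y in S i, g i y := by
  rw [← MeasureTheory.integral_indicator (MeasurableSet.univ_pi hS),
    show (Set.univ.pi S).indicator (fun x : Fin k → ℝ => ∏ i, g i (x i))
      = fun x => ∏ i, (S i).indicator (g i) (x i) from funext (indicator_pi_prod S g),
    MeasureTheory.volume_pi, MeasureTheory.integral_fintype_prod_eq_prod (fun i => (S i).indicator (g i))]
  exact Finset.prod_congr rfl fun i _ => MeasureTheory.integral_indicator (hS i)

lemma integrableOn_pi_prod {k : ℕ} (S : Fin k → Set ℝ) (hS : ∀ i, MeasurableSet (S i))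
    (g : Fin k → ℝ → ℝ) (hg : ∀ i, MeasureTheory.IntegrableOn (g i) (S i)) :
    MeasureTheory.IntegrableOn (fun x : Fin k → ℝ => ∏ i, g i (x i)) (Set.univ.pi S) := by
  have h1 : MeasureTheory.Integrable
      ((Set.univ.pi S).indicator (fun x : Fin k → ℝ => ∏ i, g i (x i))) := by
    rw [show (Set.univ.pi S).indicator (fun x : Fin k → ℝ => ∏ i, g i (x i))
      = fun x => ∏ i, (S i).indicator (g i) (x i) from funext (indicator_pi_prod S g)]
    exact MeasureTheory.Integrable.fintype_prod
      (f := fun i => (S i).indicator (g i))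
      (fun i => (MeasureTheory.integrable_indicator_iff (hS i)).2 (hg i))
  exact (MeasureTheory.integrable_indicator_iff (MeasurableSet.univ_pi hS)).1 h1

lemma integrableOn_texp (p : ℕ) :
    MeasureTheory.IntegrableOn (fun x : ℝ => x ^ p * Real.exp (-x)) (Set.Ioi 0) := by
  have h := Real.GammaIntegral_convergent (s := (p : ℝ) + 1) (by positivity)
  refine h.congr_fun (fun x hx => ?_) measurableSet_Ioi
  have h1 : ((p : ℝ) + 1 - 1) = (p : ℝ) := by ring
  simp only [h1, Real.rpow_natCast]
  ring

lemma integral_texp (p : ℕ) :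
    ∫ x in Set.Ioi (0 : ℝ), x ^ p * Real.exp (-x) = (p.factorial : ℝ) := by
  have h := (Real.Gamma_eq_integral (s := (p : ℝ) + 1) (by positivity)).symm
  have h1 : ((p : ℝ) + 1 - 1) = (p : ℝ) := by ring
  rw [MeasureTheory.setIntegral_congr_fun measurableSet_Ioi
    (fun x hx => by
      simp only [h1, Real.rpow_natCast]
      ring : Set.EqOn (fun x : ℝ => x ^ p * Real.exp (-x))
        (fun x : ℝ => Real.exp (-x) * x ^ ((p : ℝ) + 1 - 1)) (Set.Ioi 0)),
    h, Real.Gamma_nat_eq_factorial]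

lemma integrableOn_upow (p : ℕ) :
    MeasureTheory.IntegrableOn (fun x : ℝ => x ^ p) (Set.Icc 0 1) :=
  (continuous_pow p).continuousOn.integrableOn_compact isCompact_Icc

lemma integral_upow (p : ℕ) :
    ∫ x in Set.Icc (0 : ℝ) 1, x ^ p = ((p : ℝ) + 1)⁻¹ := by
  rw [MeasureTheory.integral_Icc_eq_integral_Ioc,
    ← intervalIntegral.integral_of_le zero_le_one, integral_pow]
  simp

lemma inner_integral (m k : ℕ) (u : Fin k → ℝ) :
    ∫ t in Set.univ.pi (fun _ : Fin k => Set.Ioi (0 : ℝ)),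
        (∑ i, u i * t i) ^ m * ∏ i, Real.exp (-(t i))
      = ∑ f ∈ Finset.piAntidiag (Finset.univ : Finset (Fin k)) m,
          ((Nat.multinomial Finset.univ f : ℝ) * (∏ i, (f i).factorial : ℝ))
            * ∏ i, u i ^ f i := by
  have expand : ∀ t : Fin k → ℝ,
      (∑ i, u i * t i) ^ m * ∏ i, Real.exp (-(t i))
        = ∑ f ∈ Finset.piAntidiag (Finset.univ : Finset (Fin k)) m,
            ((Nat.multinomial Finset.univ f : ℝ) * ∏ i, u i ^ f i)
              * ∏ i, ((t i) ^ f i * Real.exp (-(t i))) := by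
    intro t
    rw [Finset.sum_pow_eq_sum_piAntidiag, Finset.sum_mul]
    refine Finset.sum_congr rfl fun f hf => ?_
    simp only [mul_pow, Finset.prod_mul_distrib]
    ring
  simp only [expand]
  have hint : ∀ f ∈ Finset.piAntidiag (Finset.univ : Finset (Fin k)) m,
      MeasureTheory.Integrable (fun t : Fin k → ℝ =>
        ((Nat.multinomial Finset.univ f : ℝ) * ∏ i, u i ^ f i)
          * ∏ i, ((t i) ^ f i * Real.exp (-(t i))))
        (MeasureTheory.volume.restrict (Set.univ.pi fun _ : Fin k => Set.Ioi (0 : ℝ))) := by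
    intro f _
    exact (integrableOn_pi_prod _ (fun _ => measurableSet_Ioi)
      (fun i x => x ^ f i * Real.exp (-x))
      (fun i => integrableOn_texp (f i))).const_mul _
  rw [MeasureTheory.integral_finset_sum _ hint]
  refine Finset.sum_congr rfl fun f hf => ?_
  rw [MeasureTheory.integral_const_mul,
    setIntegral_pi_prod _ (fun _ => measurableSet_Ioi)
      (fun i => fun x => x ^ f i * Real.exp (-x))]
  simp only [integral_texp]
  ring

lemma sum_piAntidiag_succ {M : Type*} [AddCommMonoid M] (k m : ℕ)
    (g : (Fin (k + 1) → ℕ) → M) :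
    ∑ f ∈ Finset.piAntidiag (Finset.univ : Finset (Fin (k + 1))) m, g f
      = ∑ pq ∈ Finset.HasAntidiagonal.antidiagonal m,
          ∑ h ∈ Finset.piAntidiag (Finset.univ : Finset (Fin k)) pq.2, g (Fin.cons pq.1 h) := by
  rw [Finset.sum_sigma']
  symm
  refine Finset.sum_nbij' (fun x => Fin.cons x.1.1 x.2)
    (fun f => ⟨(f 0, ∑ i, f (Fin.succ i)), Fin.tail f⟩) ?_ ?_ ?_ ?_ ?_
  · rintro ⟨⟨p, q⟩, h⟩ hx
    simp only [Finset.mem_sigma, Finset.HasAntidiagonal.mem_antidiagonal, Finset.mem_piAntidiag,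
      Finset.mem_univ, implies_true, and_true] at hx ⊢
    rw [Fin.sum_univ_succ]
    simp only [Fin.cons_zero, Fin.cons_succ]
    rw [hx.2, hx.1]
  · intro f hf
    simp only [Finset.mem_piAntidiag, Finset.mem_univ, implies_true, and_true] at hf
    simp only [Finset.mem_sigma, Finset.HasAntidiagonal.mem_antidiagonal, Finset.mem_piAntidiag,
      Finset.mem_univ, implies_true, and_true]
    refine ⟨?_, rfl⟩
    rw [← hf, Fin.sum_univ_succ]
  · rintro ⟨⟨p, q⟩, h⟩ hx
    simp only [Finset.mem_sigma, Finset.HasAntidiagonal.mem_antidiagonal, Finset.mem_piAntidiag,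
      Finset.mem_univ, implies_true, and_true] at hx
    have hq : ∑ i, Fin.cons (α := fun _ => ℕ) p h (Fin.succ i) = q := by
      simp only [Fin.cons_succ]
      exact hx.2
    refine Sigma.ext ?_ (heq_of_eq ?_)
    · simp only [Fin.cons_zero, hq]
    · simp
  · intro f hf
    exact Fin.cons_self_tail f
  · rintro ⟨⟨p, q⟩, h⟩ hx
    rfl

lemma sum_piAntidiag_tq : ∀ k m : ℕ,
    ∑ f ∈ Finset.piAntidiag (Finset.univ : Finset (Fin k)) m, ∏ i, ((f i : ℝ) + 1)⁻¹
      = tq k m := by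
  intro k
  induction k with
  | zero =>
    intro m
    rw [show (Finset.univ : Finset (Fin 0)) = ∅ from rfl, Finset.piAntidiag_empty, tq]
    split_ifs <;> simp
  | succ k ih =>
    intro m
    rw [sum_piAntidiag_succ k m (fun f => ∏ i, ((f i : ℝ) + 1)⁻¹)]
    have step : ∀ pq ∈ Finset.HasAntidiagonal.antidiagonal m,
        (∑ h ∈ Finset.piAntidiag (Finset.univ : Finset (Fin k)) pq.2,
          ∏ i, ((Fin.cons (α := fun _ => ℕ) pq.1 h i : ℝ) + 1)⁻¹)
        = ((pq.1 : ℝ) + 1)⁻¹ * tq k pq.2 := by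
      intro pq _
      rw [← ih pq.2, Finset.mul_sum]
      refine Finset.sum_congr rfl fun h _ => ?_
      rw [Fin.prod_univ_succ]
      simp only [Fin.cons_zero, Fin.cons_succ]
    rw [Finset.sum_congr rfl step, Finset.Nat.sum_antidiagonal_eq_sum_range_succ_mk, tq]

lemma outer_integral (m k : ℕ) :
    (∫ u in Set.Icc (0 : Fin k → ℝ) 1,
        ∫ t in Set.univ.pi (fun _ : Fin k => Set.Ioi (0 : ℝ)),
          (∑ i, u i * t i) ^ m * ∏ i, Real.exp (-(t i)))
      = (m.factorial : ℝ) * tq k m := by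
  have hIcc : Set.Icc (0 : Fin k → ℝ) 1 = Set.univ.pi (fun _ : Fin k => Set.Icc (0 : ℝ) 1) := by
    rw [← Set.pi_univ_Icc]
    rfl
  simp only [inner_integral m k]
  rw [hIcc]
  have hint : ∀ f ∈ Finset.piAntidiag (Finset.univ : Finset (Fin k)) m,
      MeasureTheory.Integrable (fun u : Fin k → ℝ =>
        ((Nat.multinomial Finset.univ f : ℝ) * (∏ i, (f i).factorial : ℝ)) * ∏ i, u i ^ f i)
        (MeasureTheory.volume.restrict (Set.univ.pi fun _ : Fin k => Set.Icc (0 : ℝ) 1)) := by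
    intro f _
    exact (integrableOn_pi_prod _ (fun _ => measurableSet_Icc)
      (fun i x => x ^ f i) (fun i => integrableOn_upow (f i))).const_mul _
  rw [MeasureTheory.integral_finset_sum _ hint]
  have step : ∀ f ∈ Finset.piAntidiag (Finset.univ : Finset (Fin k)) m,
      (∫ u in Set.univ.pi (fun _ : Fin k => Set.Icc (0 : ℝ) 1),
        ((Nat.multinomial Finset.univ f : ℝ) * (∏ i, (f i).factorial : ℝ)) * ∏ i, u i ^ f i)
      = (m.factorial : ℝ) * ∏ i, ((f i : ℝ) + 1)⁻¹ := by
    intro f hf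
    have hsum : ∑ i, f i = m := by
      rw [Finset.mem_piAntidiag] at hf
      exact hf.1
    have hmult : (Nat.multinomial Finset.univ f : ℝ) * (∏ i, (f i).factorial : ℝ)
        = (m.factorial : ℝ) := by
      have h2 := Nat.multinomial_spec (Finset.univ : Finset (Fin k)) f
      rw [hsum] at h2
      have h3 := congrArg (Nat.cast (R := ℝ)) h2
      push_cast at h3
      linarith [h3]
    rw [MeasureTheory.integral_const_mul,
      setIntegral_pi_prod _ (fun _ => measurableSet_Icc) (fun i x => x ^ f i)]
    simp only [integral_upow]
    rw [hmult]
  rw [Finset.sum_congr rfl step, ← Finset.mul_sum, sum_piAntidiag_tq k m]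

/-- Probabilistic representation of the signed Stirling numbers of the first kind:
if `Y = U·T` with `U` uniform on `[0,1]` and `T` exponential(1) independent, and `S_k` is the
sum of `k` independent copies of `Y`, then `s(n,k) = (-1)^{n-k} C(n,k) E[S_k^{n-k}]`, the
expectation being written as an integral over `[0,1]^k × (0,∞)^k` against the
exponential density `∏ e^{-t_i}`. -/
theorem stirling1_probabilistic (n k : ℕ) (h : k ≤ n) :
    (stirling1 n k : ℝ) = (-1 : ℝ) ^ (n - k) * (n.choose k : ℝ) *
      ∫ u in Set.Icc (0 : Fin k → ℝ) 1,
        ∫ t in Set.univ.pi (fun _ : Fin k => Set.Ioi (0 : ℝ)),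
          (∑ i, u i * t i) ^ (n - k) * ∏ i, Real.exp (-(t i)) := by
  rw [outer_integral (n - k) k]
  have hkey := stirling1_key n k h
  have hC : (n.choose k : ℝ) * (k.factorial : ℝ) * ((n - k).factorial : ℝ)
      = (n.factorial : ℝ) := by
    exact_mod_cast congrArg (Nat.cast (R := ℝ)) (Nat.choose_mul_factorial_mul_factorial h)
  have hsq : (-1 : ℝ) ^ (n - k) * (-1 : ℝ) ^ (n - k) = 1 := by
    rw [← pow_add, ← two_mul, pow_mul]
    norm_num
  have hkf : (k.factorial : ℝ) ≠ 0 := Nat.cast_ne_zero.mpr (Nat.factorial_ne_zero k)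
  refine mul_right_cancel₀ hkf ?_
  linear_combination ((-1 : ℝ) ^ (n - k)) * hkey
    - ((stirling1 n k : ℝ) * (k.factorial : ℝ)) * hsq
    - ((-1 : ℝ) ^ (n - k) * tq k (n - k)) * hC
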